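/- Let $X = \ell^p((X_k)_{k\ge 1},\mathbb{N})$ be the $\ell^p$-sum of Banach spaces $X_k$, and let $T = B_{(T_k)}$ be a bounded shift operator on $X$, where $T_k: X_k\to X_{k-1}$. Then the map $\phi: \ell^p(X,\mathbb{N}) \to X$ sending $((x_{1,1},x_{1,2},\dots),(x_{2,1},x_{2,2},\dots),\dots) \mapsto (x_{1,1},x_{2,2},x_{3,3},\dots)$ is a well-defined surjective linear contraction satisfying $\phi\circ B_T = T\circ\phi$. Hence $T$ is quasi-conjugate to $B_T$ on $\ell^p(X,\mathbb{N})$. -/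

import Mathlib

open Filter Topology ENNReal

section Defs
variable {Y : Type*} [TopologicalSpace Y]

/-- A map is hypercyclic if some point has dense orbit. -/
def Hypercyclic (f : Y → Y) : Prop := ∃ y : Y, Dense (Set.range fun n : ℕ => f^[n] y)

/-- Topological transitivity. -/
def TopologicallyTransitive (f : Y → Y) : Prop :=
  ∀ U V : Set Y, IsOpen U → IsOpen V → U.Nonempty → V.Nonempty →
    ∃ n : ℕ, (f^[n] '' U ∩ V).Nonempty

/-- Topological mixing: return sets of pairs of non-empty open sets are cofinite. -/
def TopologicallyMixing (f : Y → Y) : Prop :=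
  ∀ U V : Set Y, IsOpen U → IsOpen V → U.Nonempty → V.Nonempty →
    ∃ N : ℕ, ∀ n ≥ N, (f^[n] '' U ∩ V).Nonempty

/-- Weak mixing: `f ⊕ f` is hypercyclic. -/
def WeaklyMixing (f : Y → Y) : Prop := Hypercyclic (fun q : Y × Y => (f q.1, f q.2))

/-- Chaos in the sense of Devaney: hypercyclic with a dense set of periodic points. -/
def Chaotic (f : Y → Y) : Prop :=
  Hypercyclic f ∧ Dense {y : Y | ∃ d : ℕ, 1 ≤ d ∧ f^[d] y = y}

/-- Lower density of a set of natural numbers. -/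
noncomputable def lowerDensity (A : Set ℕ) : ℝ :=
  Filter.liminf
    (fun N : ℕ => (∑ n ∈ Finset.range N, Set.indicator A (fun _ => (1 : ℝ)) n) / N)
    Filter.atTop

/-- Frequent hypercyclicity: some orbit visits every non-empty open set along a set of
positive lower density. -/
def FrequentlyHypercyclic (f : Y → Y) : Prop :=
  ∃ y : Y, ∀ U : Set Y, IsOpen U → U.Nonempty → 0 < lowerDensity {n : ℕ | f^[n] y ∈ U}

end Defs

/-- The `c₀`-sum of a family of normed spaces, realised as a submodule of `lp E ∞`:
those bounded families whose norms tend to `0` along the cofinite filter. -/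
noncomputable def c0Sum {ι : Type*} (E : ι → Type*) [∀ i, NormedAddCommGroup (E i)]
    [∀ i, NormedSpace ℝ (E i)] : Submodule ℝ (lp E ∞) where
  carrier := {x | Tendsto (fun i => ‖(x : ∀ i, E i) i‖) cofinite (nhds 0)}
  add_mem' := by
    intro a b ha hb
    refine squeeze_zero (fun i => norm_nonneg _) (fun i => ?_) (by simpa using ha.add hb)
    simp only [lp.coeFn_add, Pi.add_apply]
    exact norm_add_le _ _
  zero_mem' := by
    simp only [Set.mem_setOf_eq, lp.coeFn_zero, Pi.zero_apply, norm_zero]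
    exact tendsto_const_nhds
  smul_mem' := by
    intro c a ha
    have h : Tendsto (fun i => ‖c‖ * ‖(a : ∀ i, E i) i‖) cofinite (nhds 0) := by
      simpa using ha.const_mul ‖c‖
    refine squeeze_zero (fun i => norm_nonneg _) (fun i => ?_) h
    simp only [lp.coeFn_smul, Pi.smul_apply]
    exact (norm_smul c _).le

/-- The identity, as a continuous linear map between equal members of a family of spaces. -/
def castL (E : ℤ → Type*) [∀ k, NormedAddCommGroup (E k)] [∀ k, NormedSpace ℝ (E k)]
    {j k : ℤ} (h : j = k) : E j →L[ℝ] E k := by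
  subst h; exact ContinuousLinearMap.id ℝ (E j)

/-- The composite `T_{j,j+n} = T_{j+1} ∘ ⋯ ∘ T_{j+n} : E (j+n) → E j` (here `T k` denotes
the operator `E (k+1) → E k`). -/
noncomputable def iterComp {E : ℤ → Type*} [∀ k, NormedAddCommGroup (E k)]
    [∀ k, NormedSpace ℝ (E k)] (T : ∀ k : ℤ, E (k + 1) →L[ℝ] E k) :
    ∀ (j : ℤ) (n : ℕ), E (j + n) →L[ℝ] E j
  | j, 0 => castL E (by simp)
  | j, (n + 1) => (iterComp T j n).comp ((T (j + n)).comp (castL E (by push_cast; ring)))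

/-- for `X = ℓ^p((X_k)_k, ℕ)` and `T = B_{(T_k)}` a bounded shift on `X`,
the diagonal map `φ : ℓ^p(X,ℕ) → X`, `(y_1,y_2,…) ↦ ((y_1)_1,(y_2)_2,…)`, is a surjective
linear contraction intertwining `B_T` with `T`; hence `T` is quasi-conjugate to `B_T`. -/
theorem stmt_5 (E : ℕ → Type*) [∀ k, NormedAddCommGroup (E k)] [∀ k, NormedSpace ℝ (E k)]
    [∀ k, CompleteSpace (E k)] (p : ℝ≥0∞) [Fact (1 ≤ p)] (hp : p ≠ ∞)
    (T : ∀ k : ℕ, E (k + 1) →L[ℝ] E k)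
    (Btk : lp E p →L[ℝ] lp E p)
    (hBtk : ∀ (x : lp E p) (k : ℕ),
      (Btk x : ∀ i, E i) k = T k ((x : ∀ i, E i) (k + 1))) :
    ∃ φ : lp (fun _ : ℕ => lp E p) p →L[ℝ] lp E p,
      (∀ (y : lp (fun _ : ℕ => lp E p) p) (k : ℕ),
        (φ y : ∀ i, E i) k = (((y : ℕ → lp E p) k : ∀ i, E i)) k)
      ∧ Function.Surjective φ ∧ (∀ y, ‖φ y‖ ≤ ‖y‖) ∧ DenseRange φ
      ∧ ∀ BT : lp (fun _ : ℕ => lp E p) p →L[ℝ] lp (fun _ : ℕ => lp E p) p,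
          (∀ (y : lp (fun _ : ℕ => lp E p) p) (k : ℕ),
            (BT y : ℕ → lp E p) k = Btk ((y : ℕ → lp E p) (k + 1))) →
          ∀ y, φ (BT y) = Btk (φ y) := by

  have hp0 : p ≠ 0 := by
    have := (Fact.out : (1:ℝ≥0∞) ≤ p); intro h; simp [h] at this
  have hp' : 0 < p.toReal := ENNReal.toReal_pos hp0 hp
  -- the diagonal is in ℓ^p
  have hmem : ∀ y : lp (fun _ : ℕ => lp E p) p,
      Memℓp (fun k => ((y : ℕ → lp E p) k : ∀ i, E i) k) p := by
    intro y
    apply memℓp_gen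
    refine Summable.of_nonneg_of_le (fun k => Real.rpow_nonneg (norm_nonneg _) _)
      (fun k => Real.rpow_le_rpow (norm_nonneg _)
        (lp.norm_apply_le_norm hp0 ((y : ℕ → lp E p) k) k) hp'.le) ?_
    exact (lp.memℓp y).summable hp'
  set φ₀ : lp (fun _ : ℕ => lp E p) p →ₗ[ℝ] lp E p :=
    { toFun := fun y => ⟨fun k => ((y : ℕ → lp E p) k : ∀ i, E i) k, hmem y⟩
      map_add' := by
        intro a b
        apply lp.ext
        funext k
        simp [lp.coeFn_add]
        rfl
      map_smul' := by
        intro c a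
        apply lp.ext
        funext k
        simp [lp.coeFn_smul] } with hφ₀
  have hφ₀app : ∀ (y : lp (fun _ : ℕ => lp E p) p) (k : ℕ),
      (φ₀ y : ∀ i, E i) k = ((y : ℕ → lp E p) k : ∀ i, E i) k := fun y k => rfl
  have hbound : ∀ y, ‖φ₀ y‖ ≤ ‖y‖ := by
    intro y
    refine lp.norm_le_of_forall_sum_le hp' (norm_nonneg y) (fun s => ?_)
    calc ∑ i ∈ s, ‖(φ₀ y : ∀ i, E i) i‖ ^ p.toReal
        ≤ ∑ i ∈ s, ‖(y : ℕ → lp E p) i‖ ^ p.toReal := by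
          refine Finset.sum_le_sum (fun i _ => ?_)
          exact Real.rpow_le_rpow (norm_nonneg _)
            (lp.norm_apply_le_norm hp0 ((y : ℕ → lp E p) i) i) hp'.le
      _ ≤ ‖y‖ ^ p.toReal := by
          exact sum_le_hasSum s (fun i _ => Real.rpow_nonneg (norm_nonneg _) _)
            (lp.hasSum_norm hp' y)
  have hsurj : Function.Surjective φ₀ := by
    intro x
    have hg : Memℓp (fun k : ℕ => lp.single p k ((x : ∀ i, E i) k)) p := by
      apply memℓp_gen
      have hns : ∀ k : ℕ, ‖lp.single p k ((x : ∀ i, E i) k)‖ ^ p.toReal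
          = ‖(x : ∀ i, E i) k‖ ^ p.toReal := by
        intro k; rw [lp.norm_single (pos_iff_ne_zero.mpr hp0)]
      simpa only [hns] using (lp.memℓp x).summable hp'
    refine ⟨⟨fun k => lp.single p k ((x : ∀ i, E i) k), hg⟩, ?_⟩
    apply lp.ext
    funext k
    show (lp.single p k ((x : ∀ i, E i) k) : ∀ i, E i) k = (x : ∀ i, E i) k
    exact lp.single_apply_self p k _
  refine ⟨φ₀.mkContinuous 1 (fun y => by rw [one_mul]; exact hbound y), ?_, ?_, ?_, ?_, ?_⟩
  · intro y k
    rw [LinearMap.mkContinuous_apply]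
    exact hφ₀app y k
  · intro x
    obtain ⟨y, hy⟩ := hsurj x
    exact ⟨y, by rw [LinearMap.mkContinuous_apply]; exact hy⟩
  · intro y
    rw [LinearMap.mkContinuous_apply]
    exact hbound y
  · have : Function.Surjective (φ₀.mkContinuous 1 (fun y => by rw [one_mul]; exact hbound y)) := by
      intro x
      obtain ⟨y, hy⟩ := hsurj x
      exact ⟨y, by rw [LinearMap.mkContinuous_apply]; exact hy⟩
    exact this.denseRange
  · intro BT hBT y
    rw [LinearMap.mkContinuous_apply, LinearMap.mkContinuous_apply]
    apply lp.ext
    funext k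
    rw [hφ₀app (BT y) k, hBtk (φ₀ y) k, hφ₀app y (k + 1), hBT y k, hBtk]
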